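/- For positive integers n, k, x with 2 ≤ x ≤ n−k−x, the eccentricity distance sum of B_k(x, n−k−x) equals 5x² + (11k−3n−3)x + 4n² + 2kn − 5n − 14k + 2. -/

import Mathlib

open Finset
open scoped Classical

/-- Wiener index: sum of distances over unordered pairs of vertices. -/
noncomputable def wiener {V : Type*} [Fintype V] (G : SimpleGraph V) : ℚ :=
  (1/2) * ∑ u : V, ∑ v : V, (G.dist u v : ℚ)

/-- Harary index: sum of reciprocal distances over unordered pairs of distinct vertices. -/
noncomputable def harary {V : Type*} [Fintype V] (G : SimpleGraph V) : ℚ :=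
  (1/2) * ∑ p ∈ Finset.univ.offDiag, (1 : ℚ) / (G.dist p.1 p.2 : ℚ)

/-- Hyper-Wiener index: (1/2) Σ_{unordered pairs} (d + d²). -/
noncomputable def hyperWiener {V : Type*} [Fintype V] (G : SimpleGraph V) : ℚ :=
  (1/4) * ∑ u : V, ∑ v : V, ((G.dist u v : ℚ) + (G.dist u v : ℚ)^2)

/-- Eccentricity of a vertex: maximum distance to any other vertex. -/
noncomputable def ecc {V : Type*} [Fintype V] (G : SimpleGraph V) (u : V) : ℕ :=
  Finset.univ.sup (fun v => G.dist u v)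

/-- Connective eccentricity index: Σ_u deg(u)/ε(u). -/
noncomputable def cei {V : Type*} [Fintype V] (G : SimpleGraph V) : ℚ :=
  ∑ u : V, (G.degree u : ℚ) / (ecc G u : ℚ)

/-- Eccentricity distance sum: Σ_u ε(u)·D(u). -/
noncomputable def eds {V : Type*} [Fintype V] (G : SimpleGraph V) : ℚ :=
  ∑ u : V, (ecc G u : ℚ) * ∑ v : V, (G.dist u v : ℚ)

/-- `Bgraph x y k w`: the bipartite graph obtained from the complete bipartite graph
`K_{x,y}` (parts `Fin x` and `Fin y`) by attaching `k` pendant vertices to the vertex `w`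
of the part of size `x`. With `y = n - k - x` this is the graph `B_k(x, n-k-x)`. -/
def Bgraph (x y k : ℕ) (w : Fin x) : SimpleGraph ((Fin x ⊕ Fin y) ⊕ Fin k) :=
  SimpleGraph.fromRel (fun p q =>
    (∃ i j, p = Sum.inl (Sum.inl i) ∧ q = Sum.inl (Sum.inr j)) ∨
    (∃ m, p = Sum.inr m ∧ q = Sum.inl (Sum.inl w)))

section Aux
open SimpleGraph

lemma dist_eq_two' {V : Type*} (G : SimpleGraph V) {u v z : V} (huv : u ≠ v)
    (hna : ¬ G.Adj u v) (h1 : G.Adj u z) (h2 : G.Adj z v) : G.dist u v = 2 := by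
  have hle : G.dist u v ≤ 2 := by
    simpa using G.dist_le (Walk.cons h1 (Walk.cons h2 Walk.nil))
  have h0 : G.dist u v ≠ 0 :=
    SimpleGraph.dist_ne_zero_iff_ne_and_reachable.mpr ⟨huv, ⟨Walk.cons h1 (Walk.cons h2 Walk.nil)⟩⟩
  have h1' : G.dist u v ≠ 1 := by simpa [SimpleGraph.dist_eq_one_iff_adj] using hna
  omega

lemma dist_eq_three' {V : Type*} (G : SimpleGraph V) {u v : V} (p : G.Walk u v)
    (hp : p.length = 3) (huv : u ≠ v) (hna : ¬ G.Adj u v)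
    (hmid : ∀ z, ¬ (G.Adj u z ∧ G.Adj z v)) : G.dist u v = 3 := by
  have hle : G.dist u v ≤ 3 := hp ▸ G.dist_le p
  have h0 : G.dist u v ≠ 0 :=
    SimpleGraph.dist_ne_zero_iff_ne_and_reachable.mpr ⟨huv, ⟨p⟩⟩
  have h1' : G.dist u v ≠ 1 := by simpa [SimpleGraph.dist_eq_one_iff_adj] using hna
  have h2' : G.dist u v ≠ 2 := by
    intro h2
    obtain ⟨q, hq⟩ := SimpleGraph.exists_walk_of_dist_ne_zero (G := G) (u := u) (v := v) (by omega)
    rw [h2] at hq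
    cases q with
    | nil => simp at hq
    | cons h q' =>
      cases q' with
      | nil => simp at hq
      | cons h' q'' =>
        have hz : q''.length = 0 := by simp only [Walk.length_cons] at hq; omega
        have := (SimpleGraph.Walk.eq_of_length_eq_zero hz)
        subst this
        exact hmid _ ⟨h, h'⟩
  omega

lemma ecc_eq {V : Type*} [Fintype V] (G : SimpleGraph V) (u : V) (c : ℕ)
    (h1 : ∀ v, G.dist u v ≤ c) (h2 : ∃ v, G.dist u v = c) : ecc G u = c := by
  refine le_antisymm (Finset.sup_le fun v _ => h1 v) ?_
  obtain ⟨v, hv⟩ := h2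
  exact hv ▸ Finset.le_sup (f := fun v => G.dist u v) (Finset.mem_univ v)

lemma sum_if_eq {x : ℕ} (w : Fin x) (c d : ℚ) :
    ∑ i : Fin x, (if i = w then c else d) = (x : ℚ) * d + (c - d) := by
  have h : ∀ i : Fin x, (if i = w then c else d) = d + (if i = w then c - d else 0) := by
    intro i; split <;> ring
  rw [Finset.sum_congr rfl (fun i _ => h i), Finset.sum_add_distrib,
    Finset.sum_ite_eq' Finset.univ w]
  simp [mul_comm]

end Aux

section BgraphAdj
variable {x y k : ℕ} {w : Fin x}
variable {x y k : ℕ} {w : Fin x}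

lemma adj_AB (i : Fin x) (j : Fin y) :
    (Bgraph x y k w).Adj (Sum.inl (Sum.inl i)) (Sum.inl (Sum.inr j)) := by
  simp [Bgraph, SimpleGraph.fromRel_adj]

lemma adj_PW (m : Fin k) :
    (Bgraph x y k w).Adj (Sum.inr m) (Sum.inl (Sum.inl w)) := by
  simp [Bgraph, SimpleGraph.fromRel_adj]

lemma nadj_AA (i i' : Fin x) :
    ¬ (Bgraph x y k w).Adj (Sum.inl (Sum.inl i)) (Sum.inl (Sum.inl i')) := by
  simp [Bgraph, SimpleGraph.fromRel_adj]

lemma nadj_BB (j j' : Fin y) :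
    ¬ (Bgraph x y k w).Adj (Sum.inl (Sum.inr j)) (Sum.inl (Sum.inr j')) := by
  simp [Bgraph, SimpleGraph.fromRel_adj]

lemma nadj_PP (m m' : Fin k) :
    ¬ (Bgraph x y k w).Adj (Sum.inr m) (Sum.inr m') := by
  simp [Bgraph, SimpleGraph.fromRel_adj]

lemma nadj_PB (m : Fin k) (j : Fin y) :
    ¬ (Bgraph x y k w).Adj (Sum.inr m) (Sum.inl (Sum.inr j)) := by
  simp [Bgraph, SimpleGraph.fromRel_adj]

lemma nadj_PA {i : Fin x} (hi : i ≠ w) (m : Fin k) :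
    ¬ (Bgraph x y k w).Adj (Sum.inr m) (Sum.inl (Sum.inl i)) := by
  simp [Bgraph, SimpleGraph.fromRel_adj, hi, hi.symm]

end BgraphAdj

section BgraphDist
open SimpleGraph
variable {x y k : ℕ} {w : Fin x}

lemma dist_AB (i : Fin x) (j : Fin y) :
    (Bgraph x y k w).dist (Sum.inl (Sum.inl i)) (Sum.inl (Sum.inr j)) = 1 :=
  SimpleGraph.dist_eq_one_iff_adj.mpr (adj_AB i j)

lemma dist_BA (j : Fin y) (i : Fin x) :
    (Bgraph x y k w).dist (Sum.inl (Sum.inr j)) (Sum.inl (Sum.inl i)) = 1 :=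
  SimpleGraph.dist_eq_one_iff_adj.mpr (adj_AB i j).symm

lemma dist_WP (m : Fin k) :
    (Bgraph x y k w).dist (Sum.inl (Sum.inl w)) (Sum.inr m) = 1 :=
  SimpleGraph.dist_eq_one_iff_adj.mpr (adj_PW m).symm

lemma dist_PW (m : Fin k) :
    (Bgraph x y k w).dist (Sum.inr m) (Sum.inl (Sum.inl w)) = 1 :=
  SimpleGraph.dist_eq_one_iff_adj.mpr (adj_PW m)

lemma dist_AA {i i' : Fin x} (h : i ≠ i') (j : Fin y) :
    (Bgraph x y k w).dist (Sum.inl (Sum.inl i)) (Sum.inl (Sum.inl i')) = 2 :=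
  dist_eq_two' _ (by simp [h]) (nadj_AA i i') (adj_AB i j) (adj_AB i' j).symm

lemma dist_BB {j j' : Fin y} (h : j ≠ j') (i : Fin x) :
    (Bgraph x y k w).dist (Sum.inl (Sum.inr j)) (Sum.inl (Sum.inr j')) = 2 :=
  dist_eq_two' _ (by simp [h]) (nadj_BB j j') (adj_AB i j).symm (adj_AB i j')

lemma dist_PP {m m' : Fin k} (h : m ≠ m') :
    (Bgraph x y k w).dist (Sum.inr m) (Sum.inr m') = 2 :=
  dist_eq_two' _ (by simp [h]) (nadj_PP m m') (adj_PW m) (adj_PW m').symm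

lemma dist_BP (j : Fin y) (m : Fin k) :
    (Bgraph x y k w).dist (Sum.inl (Sum.inr j)) (Sum.inr m) = 2 :=
  dist_eq_two' _ (by simp) (fun h => nadj_PB m j h.symm) (adj_AB w j).symm (adj_PW m).symm

lemma dist_PB (m : Fin k) (j : Fin y) :
    (Bgraph x y k w).dist (Sum.inr m) (Sum.inl (Sum.inr j)) = 2 :=
  dist_eq_two' _ (by simp) (nadj_PB m j) (adj_PW m) (adj_AB w j)

lemma dist_AP {i : Fin x} (hi : i ≠ w) (m : Fin k) (j : Fin y) :
    (Bgraph x y k w).dist (Sum.inl (Sum.inl i)) (Sum.inr m) = 3 := by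
  refine dist_eq_three' _
    (Walk.cons (adj_AB i j) (Walk.cons (adj_AB w j).symm (Walk.cons (adj_PW m).symm Walk.nil)))
    rfl (by simp) (fun h => nadj_PA hi m h.symm) ?_
  rintro ((i2 | j2) | m2) ⟨h1, h2⟩
  · exact nadj_AA i i2 h1
  · exact nadj_PB m j2 h2.symm
  · exact nadj_PP m2 m h2

lemma dist_PA {i : Fin x} (hi : i ≠ w) (m : Fin k) (j : Fin y) :
    (Bgraph x y k w).dist (Sum.inr m) (Sum.inl (Sum.inl i)) = 3 := by
  rw [SimpleGraph.dist_comm]; exact dist_AP hi m j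

end BgraphDist

/-- Eccentricity distance sum of `B_k(x, n-k-x)` (here `y = n - k - x`). -/
theorem eds_Bgraph (n k x y : ℕ) (hn : n = x + y + k) (hk : 1 ≤ k)
    (hx : 2 ≤ x) (hxy : x ≤ y) (w : Fin x) :
    eds (Bgraph x y k w)
      = 5 * (x : ℚ)^2 + (11 * (k : ℚ) - 3 * n - 3) * x
          + 4 * (n : ℚ)^2 + 2 * k * n - 5 * n - 14 * k + 2 := by
  have hy : 2 ≤ y := hxy.trans' hx
  obtain ⟨i0, hi0⟩ : ∃ i : Fin x, i ≠ w :=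
    Fintype.exists_ne_of_one_lt_card (by simp; omega) w
  set j0 : Fin y := ⟨0, by omega⟩
  set m0 : Fin k := ⟨0, hk⟩
  -- eccentricities
  have ecc_A : ∀ i : Fin x, ecc (Bgraph x y k w) (Sum.inl (Sum.inl i)) = if i = w then 2 else 3 := by
    intro i
    by_cases h : i = w
    · rw [if_pos h]
      obtain ⟨i1, hi1⟩ : ∃ i' : Fin x, i' ≠ i :=
        Fintype.exists_ne_of_one_lt_card (by simp; omega) i
      refine ecc_eq (Bgraph x y k w) _ 2 ?_
        ⟨Sum.inl (Sum.inl i1), dist_AA (w := w) (Ne.symm hi1) j0⟩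
      rintro ((i2 | j2) | m2)
      · by_cases h2 : i = i2
        · rw [h2, SimpleGraph.dist_self]; omega
        · rw [dist_AA h2 j0]
      · rw [dist_AB]; omega
      · rw [h, dist_WP]; omega
    · rw [if_neg h]
      refine ecc_eq (Bgraph x y k w) _ 3 ?_ ⟨Sum.inr m0, dist_AP h m0 j0⟩
      rintro ((i2 | j2) | m2)
      · by_cases h2 : i = i2
        · rw [h2, SimpleGraph.dist_self]; omega
        · rw [dist_AA h2 j0]; omega
      · rw [dist_AB]; omega
      · rw [dist_AP h m2 j0]
  have ecc_B : ∀ j : Fin y, ecc (Bgraph x y k w) (Sum.inl (Sum.inr j)) = 2 := by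
    intro j
    refine ecc_eq (Bgraph x y k w) _ 2 ?_ ⟨Sum.inr m0, dist_BP j m0⟩
    rintro ((i2 | j2) | m2)
    · rw [dist_BA]; omega
    · by_cases h2 : j = j2
      · rw [h2, SimpleGraph.dist_self]; omega
      · rw [dist_BB h2 w]
    · rw [dist_BP]
  have ecc_P : ∀ m : Fin k, ecc (Bgraph x y k w) (Sum.inr m) = 3 := by
    intro m
    refine ecc_eq (Bgraph x y k w) _ 3 ?_ ⟨Sum.inl (Sum.inl i0), dist_PA hi0 m j0⟩
    rintro ((i2 | j2) | m2)
    · by_cases h2 : i2 = w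
      · rw [h2, dist_PW]; omega
      · rw [dist_PA h2 m j0]
    · rw [dist_PB]; omega
    · by_cases h2 : m = m2
      · rw [h2, SimpleGraph.dist_self]; omega
      · rw [dist_PP h2]; omega
  -- row sums of distances
  have split : ∀ f : ((Fin x ⊕ Fin y) ⊕ Fin k) → ℚ,
      ∑ v, f v = (∑ i : Fin x, f (Sum.inl (Sum.inl i))) + (∑ j : Fin y, f (Sum.inl (Sum.inr j)))
        + (∑ m : Fin k, f (Sum.inr m)) := by
    intro f
    rw [Fintype.sum_sum_type, Fintype.sum_sum_type]
  have D_A : ∀ i : Fin x, ∑ v, ((Bgraph x y k w).dist (Sum.inl (Sum.inl i)) v : ℚ)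
      = (if i = w then (2*x - 2 + y + k : ℚ) else (2*x - 2 + y + 3*k : ℚ)) := by
    intro i
    rw [split]
    have s1 : ∑ i2 : Fin x, ((Bgraph x y k w).dist (Sum.inl (Sum.inl i)) (Sum.inl (Sum.inl i2)) : ℚ)
        = 2*x - 2 := by
      have h1 : ∀ i2 : Fin x, ((Bgraph x y k w).dist (Sum.inl (Sum.inl i)) (Sum.inl (Sum.inl i2)) : ℚ)
          = if i2 = i then 0 else 2 := by
        intro i2
        by_cases h2 : i2 = i
        · rw [if_pos h2, h2]; simp
        · rw [if_neg h2, dist_AA (Ne.symm h2) j0]; norm_num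
      rw [Finset.sum_congr rfl fun i2 _ => h1 i2, sum_if_eq]; ring
    have s2 : ∑ j : Fin y, ((Bgraph x y k w).dist (Sum.inl (Sum.inl i)) (Sum.inl (Sum.inr j)) : ℚ) = y := by
      have h1 : ∀ j : Fin y, ((Bgraph x y k w).dist (Sum.inl (Sum.inl i)) (Sum.inl (Sum.inr j)) : ℚ) = 1 :=
        fun j => by rw [dist_AB]; norm_num
      rw [Finset.sum_congr rfl fun j _ => h1 j, Finset.sum_const, Finset.card_univ,
        Fintype.card_fin, nsmul_eq_mul, mul_one]
    rw [s1, s2]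
    by_cases h : i = w
    · have s3 : ∑ m : Fin k, ((Bgraph x y k w).dist (Sum.inl (Sum.inl i)) (Sum.inr m) : ℚ) = k := by
        have h1 : ∀ m : Fin k, ((Bgraph x y k w).dist (Sum.inl (Sum.inl i)) (Sum.inr m) : ℚ) = 1 :=
          fun m => by rw [h, dist_WP]; norm_num
        rw [Finset.sum_congr rfl fun m _ => h1 m, Finset.sum_const, Finset.card_univ,
          Fintype.card_fin, nsmul_eq_mul, mul_one]
      rw [s3, if_pos h]
    · have s3 : ∑ m : Fin k, ((Bgraph x y k w).dist (Sum.inl (Sum.inl i)) (Sum.inr m) : ℚ) = 3*k := by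
        have h1 : ∀ m : Fin k, ((Bgraph x y k w).dist (Sum.inl (Sum.inl i)) (Sum.inr m) : ℚ) = 3 :=
          fun m => by rw [dist_AP h m j0]; norm_num
        rw [Finset.sum_congr rfl fun m _ => h1 m, Finset.sum_const, Finset.card_univ,
          Fintype.card_fin, nsmul_eq_mul]; ring
      rw [s3, if_neg h]
  have D_B : ∀ j : Fin y, ∑ v, ((Bgraph x y k w).dist (Sum.inl (Sum.inr j)) v : ℚ)
      = (x : ℚ) + 2*y - 2 + 2*k := by
    intro j
    rw [split]
    have s1 : ∑ i : Fin x, ((Bgraph x y k w).dist (Sum.inl (Sum.inr j)) (Sum.inl (Sum.inl i)) : ℚ) = x := by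
      have h1 : ∀ i : Fin x, ((Bgraph x y k w).dist (Sum.inl (Sum.inr j)) (Sum.inl (Sum.inl i)) : ℚ) = 1 :=
        fun i => by rw [dist_BA]; norm_num
      rw [Finset.sum_congr rfl fun i _ => h1 i, Finset.sum_const, Finset.card_univ,
        Fintype.card_fin, nsmul_eq_mul, mul_one]
    have s2 : ∑ j2 : Fin y, ((Bgraph x y k w).dist (Sum.inl (Sum.inr j)) (Sum.inl (Sum.inr j2)) : ℚ)
        = 2*y - 2 := by
      have h1 : ∀ j2 : Fin y, ((Bgraph x y k w).dist (Sum.inl (Sum.inr j)) (Sum.inl (Sum.inr j2)) : ℚ)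
          = if j2 = j then 0 else 2 := by
        intro j2
        by_cases h2 : j2 = j
        · rw [if_pos h2, h2]; simp
        · rw [if_neg h2, dist_BB (Ne.symm h2) w]; norm_num
      rw [Finset.sum_congr rfl fun j2 _ => h1 j2, sum_if_eq]; ring
    have s3 : ∑ m : Fin k, ((Bgraph x y k w).dist (Sum.inl (Sum.inr j)) (Sum.inr m) : ℚ) = 2*k := by
      have h1 : ∀ m : Fin k, ((Bgraph x y k w).dist (Sum.inl (Sum.inr j)) (Sum.inr m) : ℚ) = 2 :=
        fun m => by rw [dist_BP]; norm_num
      rw [Finset.sum_congr rfl fun m _ => h1 m, Finset.sum_const, Finset.card_univ,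
        Fintype.card_fin, nsmul_eq_mul]; ring
    rw [s1, s2, s3]; ring
  have D_P : ∀ m : Fin k, ∑ v, ((Bgraph x y k w).dist (Sum.inr m) v : ℚ)
      = 3*(x : ℚ) + 2*y + 2*k - 4 := by
    intro m
    rw [split]
    have s1 : ∑ i : Fin x, ((Bgraph x y k w).dist (Sum.inr m) (Sum.inl (Sum.inl i)) : ℚ) = 3*x - 2 := by
      have h1 : ∀ i : Fin x, ((Bgraph x y k w).dist (Sum.inr m) (Sum.inl (Sum.inl i)) : ℚ)
          = if i = w then 1 else 3 := by
        intro i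
        by_cases h2 : i = w
        · rw [if_pos h2, h2, dist_PW]; norm_num
        · rw [if_neg h2, dist_PA h2 m j0]; norm_num
      rw [Finset.sum_congr rfl fun i _ => h1 i, sum_if_eq]; ring
    have s2 : ∑ j : Fin y, ((Bgraph x y k w).dist (Sum.inr m) (Sum.inl (Sum.inr j)) : ℚ) = 2*y := by
      have h1 : ∀ j : Fin y, ((Bgraph x y k w).dist (Sum.inr m) (Sum.inl (Sum.inr j)) : ℚ) = 2 :=
        fun j => by rw [dist_PB]; norm_num
      rw [Finset.sum_congr rfl fun j _ => h1 j, Finset.sum_const, Finset.card_univ,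
        Fintype.card_fin, nsmul_eq_mul]; ring
    have s3 : ∑ m2 : Fin k, ((Bgraph x y k w).dist (Sum.inr m) (Sum.inr m2) : ℚ) = 2*k - 2 := by
      have h1 : ∀ m2 : Fin k, ((Bgraph x y k w).dist (Sum.inr m) (Sum.inr m2) : ℚ)
          = if m2 = m then 0 else 2 := by
        intro m2
        by_cases h2 : m2 = m
        · rw [if_pos h2, h2]; simp
        · rw [if_neg h2, dist_PP (Ne.symm h2)]; norm_num
      rw [Finset.sum_congr rfl fun m2 _ => h1 m2, sum_if_eq]; ring
    rw [s1, s2, s3]; ring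
  -- assemble
  rw [eds]
  rw [split]
  have t1 : ∑ i : Fin x, ((ecc (Bgraph x y k w) (Sum.inl (Sum.inl i)) : ℚ)
      * ∑ v, ((Bgraph x y k w).dist (Sum.inl (Sum.inl i)) v : ℚ))
      = (x : ℚ) * (3 * (2*x - 2 + y + 3*k)) + (2 * (2*x - 2 + y + k) - 3 * (2*x - 2 + y + 3*k)) := by
    have h1 : ∀ i : Fin x, (ecc (Bgraph x y k w) (Sum.inl (Sum.inl i)) : ℚ)
        * ∑ v, ((Bgraph x y k w).dist (Sum.inl (Sum.inl i)) v : ℚ)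
        = if i = w then 2 * (2*(x:ℚ) - 2 + y + k) else 3 * (2*(x:ℚ) - 2 + y + 3*k) := by
      intro i
      rw [ecc_A i, D_A i]
      by_cases h : i = w
      · rw [if_pos h, if_pos h, if_pos h]; norm_num
      · rw [if_neg h, if_neg h, if_neg h]; norm_num
    rw [Finset.sum_congr rfl fun i _ => h1 i, sum_if_eq]
  have t2 : ∑ j : Fin y, ((ecc (Bgraph x y k w) (Sum.inl (Sum.inr j)) : ℚ)
      * ∑ v, ((Bgraph x y k w).dist (Sum.inl (Sum.inr j)) v : ℚ))
      = (y : ℚ) * (2 * ((x:ℚ) + 2*y - 2 + 2*k)) := by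
    have h1 : ∀ j : Fin y, (ecc (Bgraph x y k w) (Sum.inl (Sum.inr j)) : ℚ)
        * ∑ v, ((Bgraph x y k w).dist (Sum.inl (Sum.inr j)) v : ℚ)
        = 2 * ((x:ℚ) + 2*y - 2 + 2*k) := by
      intro j; rw [ecc_B j, D_B j]; norm_num
    rw [Finset.sum_congr rfl fun j _ => h1 j, Finset.sum_const, Finset.card_univ,
      Fintype.card_fin, nsmul_eq_mul]
  have t3 : ∑ m : Fin k, ((ecc (Bgraph x y k w) (Sum.inr m) : ℚ)
      * ∑ v, ((Bgraph x y k w).dist (Sum.inr m) v : ℚ))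
      = (k : ℚ) * (3 * (3*(x:ℚ) + 2*y + 2*k - 4)) := by
    have h1 : ∀ m : Fin k, (ecc (Bgraph x y k w) (Sum.inr m) : ℚ)
        * ∑ v, ((Bgraph x y k w).dist (Sum.inr m) v : ℚ)
        = 3 * (3*(x:ℚ) + 2*y + 2*k - 4) := by
      intro m; rw [ecc_P m, D_P m]; norm_num
    rw [Finset.sum_congr rfl fun m _ => h1 m, Finset.sum_const, Finset.card_univ,
      Fintype.card_fin, nsmul_eq_mul]
  rw [t1, t2, t3]
  have hnq : (n : ℚ) = x + y + k := by exact_mod_cast congrArg (Nat.cast : ℕ → ℚ) hn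
  rw [hnq]; ring
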